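/- Let a > -2 and ‖y‖ = sup_{k≥2}|y_k|/Γ(k+a). Then for every l ≥ 2 and every formal series y = Σ_{k≥2} y_k x^k of finite norm, the coefficients of the l-th power satisfy |(y^l)_k| ≤ ‖y‖^l · C^{l-1} · Γ(k-2(l-1)+a) for all k ≥ 2l, where C depends only on a. -/

import Mathlib

/-- Coefficients of the formal `l`-fold Cauchy product of `y = Σ_{k≥2} y_k x^k`. -/
def powCoeff (y : ℕ → ℝ) : ℕ → ℕ → ℝ
  | 0, _ => 0
  | 1, k => y k
  | (l + 2), k => ∑ j ∈ Finset.range (k + 1), powCoeff y (l + 1) j * y (k - j)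


lemma convGamma (a : ℝ) (ha : -2 < a) :
    ∀ m : ℕ, 4 ≤ m →
      ∑ i ∈ Finset.Icc 2 (m - 2),
        Real.Gamma ((i : ℝ) + a) * Real.Gamma ((m : ℝ) - (i : ℝ) + a)
      ≤ 2 * Real.Gamma (2 + a) * (3 + a) * Real.Gamma ((m : ℝ) - 2 + a) := by
  have h2a : (0:ℝ) < 2 + a := by linarith
  have hγ : 0 < Real.Gamma (2 + a) := Real.Gamma_pos_of_pos h2a
  -- the statement as a predicate, for induction from 5
  suffices H : ∀ m : ℕ, 5 ≤ m →
      ∑ i ∈ Finset.Icc 2 (m - 2),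
        Real.Gamma ((i : ℝ) + a) * Real.Gamma ((m : ℝ) - (i : ℝ) + a)
      ≤ 2 * Real.Gamma (2 + a) * (3 + a) * Real.Gamma ((m : ℝ) - 2 + a) by
    intro m hm
    rcases eq_or_lt_of_le hm with h4 | h5
    · -- m = 4
      rw [← h4]
      rw [show (4:ℕ) - 2 = 2 from rfl, Finset.Icc_self, Finset.sum_singleton]
      push_cast
      have e1 : (4:ℝ) - 2 + a = 2 + a := by ring
      rw [e1]
      nlinarith [mul_pos hγ hγ]
    · exact H m h5
  intro m hm
  induction m, hm using Nat.le_induction with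
  | base =>
      -- m = 5 : sum over Icc 2 3
      have : Finset.Icc 2 3 = ({2, 3} : Finset ℕ) := rfl
      rw [show (5:ℕ) - 2 = 3 from rfl, this, Finset.sum_pair (by norm_num)]
      push_cast
      have h3a : 0 < Real.Gamma (3 + a) := Real.Gamma_pos_of_pos (by linarith)
      have e1 : (5:ℝ) - 2 + a = 3 + a := by ring
      have e2 : (5:ℝ) - 3 + a = 2 + a := by ring
      rw [e1, e2]
      nlinarith [mul_pos hγ h3a]
  | succ m hm IH =>
      have hm4 : (2:ℕ) ≤ m - 2 := by omega
      have hM : (5:ℝ) ≤ (m:ℝ) := by exact_mod_cast hm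
      -- bounds for indices in the sum
      have hidx : ∀ i ∈ Finset.Icc 2 (m - 2), (2:ℝ) ≤ (i:ℝ) ∧ (i:ℝ) ≤ (m:ℝ) - 2 := by
        intro i hi
        simp only [Finset.mem_Icc] at hi
        constructor
        · exact_mod_cast hi.1
        · have h2 : i + 2 ≤ m := by omega
          have : ((i:ℝ) + 2) ≤ (m:ℝ) := by exact_mod_cast h2
          linarith
      set S := ∑ i ∈ Finset.Icc 2 (m - 2),
        Real.Gamma ((i : ℝ) + a) * Real.Gamma ((m : ℝ) - (i : ℝ) + a) with hSdef
      have hG : 0 < Real.Gamma ((m:ℝ) - 2 + a) := Real.Gamma_pos_of_pos (by linarith)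
      have hSpos : 0 ≤ S := by
        apply Finset.sum_nonneg
        intro i hi
        obtain ⟨h1, h2⟩ := hidx i hi
        exact (mul_pos (Real.Gamma_pos_of_pos (by linarith))
          (Real.Gamma_pos_of_pos (by linarith))).le
      -- split the top term of the sum for m+1
      rw [show (m + 1 : ℕ) - 2 = (m - 2) + 1 from by omega,
        Finset.sum_Icc_succ_top (by omega : 2 ≤ (m-2)+1)]
      -- the top term
      have hc1 : ((m - 2 + 1 : ℕ) : ℝ) = (m:ℝ) - 1 := by
        have h2 : (2:ℕ) ≤ m := by omega
        push_cast [h2]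
        ring
      have top1 : Real.Gamma (((m - 2 + 1 : ℕ) : ℝ) + a)
          = ((m:ℝ) - 2 + a) * Real.Gamma ((m:ℝ) - 2 + a) := by
        rw [hc1, show (m:ℝ) - 1 + a = ((m:ℝ) - 2 + a) + 1 from by ring,
          Real.Gamma_add_one (ne_of_gt (show (0:ℝ) < (m:ℝ) - 2 + a from by linarith))]
      have top2 : (((m+1 : ℕ)) : ℝ) - ((m - 2 + 1 : ℕ) : ℝ) + a = 2 + a := by
        rw [hc1]; push_cast; ring
      rw [top2, top1]
      -- rewrite the main sum using Γ(x+1) = x Γ(x)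
      have main : ∑ i ∈ Finset.Icc 2 (m - 2),
          Real.Gamma ((i : ℝ) + a) * Real.Gamma (((m+1 : ℕ) : ℝ) - (i : ℝ) + a)
          = ∑ i ∈ Finset.Icc 2 (m - 2), ((m:ℝ) - (i:ℝ) + a) *
              (Real.Gamma ((i : ℝ) + a) * Real.Gamma ((m : ℝ) - (i : ℝ) + a)) := by
        apply Finset.sum_congr rfl
        intro i hi
        obtain ⟨h1, h2⟩ := hidx i hi
        rw [show ((m+1 : ℕ) : ℝ) - (i:ℝ) + a = ((m:ℝ) - (i:ℝ) + a) + 1 from by push_cast; ring,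
          Real.Gamma_add_one (ne_of_gt (show (0:ℝ) < (m:ℝ) - (i:ℝ) + a from by linarith))]
        ring
      rw [main]
      -- reflection identity
      have hrefl : ∑ i ∈ Finset.Icc 2 (m - 2), ((m:ℝ) - (i:ℝ) + a) *
              (Real.Gamma ((i : ℝ) + a) * Real.Gamma ((m : ℝ) - (i : ℝ) + a))
          = ∑ i ∈ Finset.Icc 2 (m - 2), ((i:ℝ) + a) *
              (Real.Gamma ((i : ℝ) + a) * Real.Gamma ((m : ℝ) - (i : ℝ) + a)) := by
        apply Finset.sum_nbij' (fun i => m - i) (fun i => m - i)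
        · intro i hi
          simp only [Finset.mem_Icc] at hi ⊢
          omega
        · intro i hi
          simp only [Finset.mem_Icc] at hi ⊢
          omega
        · intro i hi
          simp only [Finset.mem_Icc] at hi
          omega
        · intro i hi
          simp only [Finset.mem_Icc] at hi
          omega
        · intro i hi
          simp only [Finset.mem_Icc] at hi
          have hle : i ≤ m := by omega
          have hcast : ((m - i : ℕ) : ℝ) = (m:ℝ) - (i:ℝ) := by
            push_cast [hle]; ring
          rw [hcast]
          have : (m:ℝ) - ((m:ℝ) - (i:ℝ)) + a = (i:ℝ) + a := by ring
          rw [this]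
          ring
      -- combine: sum of (m-i+a) weights equals (m+2a)/2 * S
      have hA : ∑ i ∈ Finset.Icc 2 (m - 2), ((m:ℝ) - (i:ℝ) + a) *
              (Real.Gamma ((i : ℝ) + a) * Real.Gamma ((m : ℝ) - (i : ℝ) + a))
          = ((m:ℝ) + 2*a)/2 * S := by
        have hsum : ∑ i ∈ Finset.Icc 2 (m - 2), ((m:ℝ) - (i:ℝ) + a) *
              (Real.Gamma ((i : ℝ) + a) * Real.Gamma ((m : ℝ) - (i : ℝ) + a))
            + ∑ i ∈ Finset.Icc 2 (m - 2), ((i:ℝ) + a) *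
              (Real.Gamma ((i : ℝ) + a) * Real.Gamma ((m : ℝ) - (i : ℝ) + a))
            = ((m:ℝ) + 2*a) * S := by
          rw [hSdef, ← Finset.sum_add_distrib, Finset.mul_sum]
          apply Finset.sum_congr rfl
          intro i _
          ring
        rw [hrefl] at hsum ⊢
        linarith
      rw [hA]
      -- final arithmetic
      have hcast2 : ((m + 1 : ℕ) : ℝ) - 2 + a = ((m:ℝ) - 2 + a) + 1 := by push_cast; ring
      rw [hcast2, Real.Gamma_add_one (ne_of_gt (show (0:ℝ) < (m:ℝ) - 2 + a from by linarith))]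
      nlinarith [mul_nonneg (show (0:ℝ) ≤ (m:ℝ) + 2*a from by linarith)
          (sub_nonneg.2 IH),
        mul_nonneg (mul_pos hγ hG).le
          (mul_nonneg (show (0:ℝ) ≤ (m:ℝ) - 5 from by linarith)
            (show (0:ℝ) ≤ 2 + a from by linarith))]



lemma main_aux (a : ℝ) (ha : -2 < a) (y : ℕ → ℝ) (N : ℝ)
    (h0 : ∀ k, k < 2 → y k = 0)
    (hb : ∀ k, 2 ≤ k → |y k| ≤ N * Real.Gamma ((k : ℝ) + a)) :
    ∀ l, 1 ≤ l → (∀ k, k < 2 * l → powCoeff y l k = 0) ∧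
      ∀ k, 2 * l ≤ k → |powCoeff y l k| ≤
        N ^ l * (2 * Real.Gamma (2 + a) * (3 + a)) ^ (l - 1) *
          Real.Gamma ((k : ℝ) - 2 * ((l : ℝ) - 1) + a) := by
  have h2a : (0:ℝ) < 2 + a := by linarith
  have hγ : 0 < Real.Gamma (2 + a) := Real.Gamma_pos_of_pos h2a
  have hN : 0 ≤ N := by
    have h1 := hb 2 le_rfl
    have h2 : ((2:ℕ):ℝ) + a = 2 + a := by norm_num
    rw [h2] at h1
    nlinarith [abs_nonneg (y 2)]
  obtain ⟨C, hC, hCdef⟩ : ∃ C : ℝ, 0 < C ∧ C = 2 * Real.Gamma (2 + a) * (3 + a) :=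
    ⟨_, mul_pos (mul_pos two_pos hγ) (by linarith), rfl⟩
  intro l hl
  simp only [← hCdef]
  induction l, hl using Nat.le_induction with
  | base =>
      constructor
      · intro k hk
        exact h0 k (by omega)
      · intro k hk
        have : ((1:ℕ):ℝ) - 1 = 0 := by norm_num
        simpa [powCoeff, this] using hb k (by omega)
  | succ n hn IH =>
      obtain ⟨IH0, IH1⟩ := IH
      -- powCoeff y (n+1) k; here n ≥ 1 so n = n'+1 and n+1 = n'+2
      obtain ⟨n', rfl⟩ : ∃ n'', n = n'' + 1 := ⟨n - 1, by omega⟩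
      have hdef : ∀ k, powCoeff y (n' + 1 + 1) k
          = ∑ j ∈ Finset.range (k + 1), powCoeff y (n' + 1) j * y (k - j) := by
        intro k; rfl
      constructor
      · intro k hk
        rw [hdef]
        apply Finset.sum_eq_zero
        intro j hj
        simp only [Finset.mem_range] at hj
        by_cases hj2 : j < 2 * (n' + 1)
        · rw [IH0 j hj2, zero_mul]
        · rw [h0 (k - j) (by omega), mul_zero]
      · intro k hk
        -- restrict the sum to Icc (2(n'+1)) (k-2)
        have hsum : powCoeff y (n' + 1 + 1) k
            = ∑ j ∈ Finset.Icc (2 * (n' + 1)) (k - 2),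
                powCoeff y (n' + 1) j * y (k - j) := by
          rw [hdef]
          apply (Finset.sum_subset ?_ ?_).symm
          · intro j hj
            simp only [Finset.mem_Icc] at hj
            simp only [Finset.mem_range]
            omega
          · intro j hj1 hj2
            simp only [Finset.mem_range] at hj1
            simp only [Finset.mem_Icc, not_and, not_le] at hj2
            by_cases hj3 : j < 2 * (n' + 1)
            · rw [IH0 j hj3, zero_mul]
            · rw [h0 (k - j) (by omega), mul_zero]
        rw [hsum]
        -- termwise bound
        have hterm : ∀ j ∈ Finset.Icc (2 * (n' + 1)) (k - 2),
            |powCoeff y (n' + 1) j * y (k - j)| ≤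
              N ^ (n' + 2) * C ^ n' *
                (Real.Gamma ((j:ℝ) - 2 * (n':ℝ) + a) *
                  Real.Gamma ((k:ℝ) - (j:ℝ) + a)) := by
          intro j hj
          simp only [Finset.mem_Icc] at hj
          have hj1 : 2 * (n' + 1) ≤ j := hj.1
          have hj2 : j ≤ k - 2 := hj.2
          have hkj : 2 ≤ k - j := by omega
          have hb1 := IH1 j hj1
          have hb2 := hb (k - j) hkj
          have hc1 : ((n' + 1 : ℕ) : ℝ) - 1 = (n' : ℝ) := by push_cast; ring
          have hc2 : ((k - j : ℕ) : ℝ) = (k:ℝ) - (j:ℝ) := by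
            have hjk : j ≤ k := by omega
            rw [Nat.cast_sub hjk]
          rw [hc1] at hb1
          rw [hc2] at hb2
          rw [abs_mul]
          have hg1 : 0 ≤ Real.Gamma ((j:ℝ) - 2 * (n':ℝ) + a) := by
            apply (Real.Gamma_pos_of_pos ?_).le
            have : (2 * (n' + 1) : ℕ) ≤ (j:ℕ) := hj1
            have hcast : (2 * ((n':ℝ) + 1)) ≤ (j:ℝ) := by exact_mod_cast this
            linarith
          have hg2 : 0 ≤ |y (k - j)| := abs_nonneg _
          calc |powCoeff y (n' + 1) j| * |y (k - j)|
              ≤ (N ^ (n' + 1) * C ^ n' * Real.Gamma ((j:ℝ) - 2 * (n':ℝ) + a)) *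
                (N * Real.Gamma ((k:ℝ) - (j:ℝ) + a)) := by
                apply mul_le_mul hb1 hb2 hg2
                exact mul_nonneg (mul_nonneg (pow_nonneg hN _) (pow_nonneg hC.le _)) hg1
            _ = N ^ (n' + 2) * C ^ n' *
                (Real.Gamma ((j:ℝ) - 2 * (n':ℝ) + a) *
                  Real.Gamma ((k:ℝ) - (j:ℝ) + a)) := by ring
        -- sum the bounds
        have habs := Finset.abs_sum_le_sum_abs
          (fun j => powCoeff y (n' + 1) j * y (k - j))
          (Finset.Icc (2 * (n' + 1)) (k - 2))
        have hstep := Finset.sum_le_sum hterm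
        -- reindex
        set m := k - 2 * n' with hmdef
        have hm4 : 4 ≤ m := by omega
        have hmcast : ((m:ℕ):ℝ) = (k:ℝ) - 2 * (n':ℝ) := by
          have h2n : 2 * n' ≤ k := by omega
          rw [hmdef, Nat.cast_sub h2n]; push_cast; ring
        have hre : ∑ j ∈ Finset.Icc (2 * (n' + 1)) (k - 2),
              (Real.Gamma ((j:ℝ) - 2 * (n':ℝ) + a) *
                Real.Gamma ((k:ℝ) - (j:ℝ) + a))
            = ∑ i ∈ Finset.Icc 2 (m - 2),
                Real.Gamma ((i:ℝ) + a) * Real.Gamma ((m:ℝ) - (i:ℝ) + a) := by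
          apply Finset.sum_nbij' (fun j => j - 2 * n') (fun i => i + 2 * n')
          · intro j hj
            simp only [Finset.mem_Icc] at hj ⊢
            omega
          · intro i hi
            simp only [Finset.mem_Icc] at hi ⊢
            omega
          · intro j hj
            simp only [Finset.mem_Icc] at hj
            omega
          · intro i hi
            omega
          · intro j hj
            simp only [Finset.mem_Icc] at hj
            have hjn : 2 * n' ≤ j := by omega
            have hc3 : ((j - 2 * n' : ℕ):ℝ) = (j:ℝ) - 2 * (n':ℝ) := by
              rw [Nat.cast_sub hjn]; push_cast; ring
            rw [hc3, hmcast]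
            congr 1
            congr 1
            ring
        calc |∑ j ∈ Finset.Icc (2 * (n' + 1)) (k - 2), powCoeff y (n' + 1) j * y (k - j)|
            ≤ ∑ j ∈ Finset.Icc (2 * (n' + 1)) (k - 2),
                |powCoeff y (n' + 1) j * y (k - j)| := habs
          _ ≤ ∑ j ∈ Finset.Icc (2 * (n' + 1)) (k - 2), N ^ (n' + 2) * C ^ n' *
                (Real.Gamma ((j:ℝ) - 2 * (n':ℝ) + a) *
                  Real.Gamma ((k:ℝ) - (j:ℝ) + a)) := hstep
          _ = N ^ (n' + 2) * C ^ n' *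
                ∑ j ∈ Finset.Icc (2 * (n' + 1)) (k - 2),
                (Real.Gamma ((j:ℝ) - 2 * (n':ℝ) + a) *
                  Real.Gamma ((k:ℝ) - (j:ℝ) + a)) := by
              rw [Finset.mul_sum]
          _ = N ^ (n' + 2) * C ^ n' * ∑ i ∈ Finset.Icc 2 (m - 2),
                Real.Gamma ((i:ℝ) + a) * Real.Gamma ((m:ℝ) - (i:ℝ) + a) := by
              rw [hre]
          _ ≤ N ^ (n' + 2) * C ^ n' * (C * Real.Gamma ((m:ℝ) - 2 + a)) := by
              rw [hCdef]
              exact mul_le_mul_of_nonneg_left (convGamma a ha m hm4)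
                (mul_nonneg (pow_nonneg hN _)
                  (pow_nonneg (mul_pos (mul_pos two_pos hγ)
                    (show (0:ℝ) < 3 + a from by linarith)).le _))
          _ = N ^ (n' + 1 + 1) * C ^ (n' + 1 + 1 - 1) *
                Real.Gamma ((k:ℝ) - 2 * (((n' + 1 + 1 : ℕ):ℝ) - 1) + a) := by
              rw [hmcast]
              have heq : (k:ℝ) - 2 * (n':ℝ) - 2 + a
                  = (k:ℝ) - 2 * (((n' + 1 + 1 : ℕ):ℝ) - 1) + a := by
                push_cast; ring
              rw [heq, show n' + 1 + 1 - 1 = n' + 1 from rfl, pow_succ]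
              ring

/-- For `a > -2` there is `C > 0` (depending only on `a`) such that for every formal
series `y = Σ_{k≥2} y_k x^k` with `|y_k| ≤ N Γ(k+a)` and every `l ≥ 2`,
`|(y^l)_k| ≤ N^l C^{l-1} Γ(k-2(l-1)+a)` for all `k ≥ 2l`. -/
theorem stmt8 (a : ℝ) (ha : -2 < a) :
    ∃ C > (0 : ℝ), ∀ (y : ℕ → ℝ) (N : ℝ),
      (∀ k, k < 2 → y k = 0) →
      (∀ k, 2 ≤ k → |y k| ≤ N * Real.Gamma ((k : ℝ) + a)) →
      ∀ l, 2 ≤ l → ∀ k, 2 * l ≤ k →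
        |powCoeff y l k| ≤ N ^ l * C ^ (l - 1) *
          Real.Gamma ((k : ℝ) - 2 * ((l : ℝ) - 1) + a) := by
  refine ⟨2 * Real.Gamma (2 + a) * (3 + a),
    mul_pos (mul_pos two_pos (Real.Gamma_pos_of_pos (by linarith))) (by linarith), ?_⟩
  intro y N h0 hb l hl k hk
  exact (main_aux a ha y N h0 hb l (by omega)).2 k hk
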